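/- The nine octonionic Pauli matrices on 𝕆² ≅ ℝ¹⁶, given in block form by I₁ = [[0,Id],[Id,0]], Iₐ = [[0,-R_u],[R_u,0]] for u ∈ {i,j,k,e,f,g,h} (a = 2,...,8), and I₉ = [[Id,0],[0,-Id]], where R_u is right octonion multiplication by u, form a Clifford system of rank 9: each Iα is a self-adjoint involution and they pairwise anticommute. -/

import Mathlib

noncomputable section

open Quaternion

/-- The octonions via Cayley–Dickson on ℍ; `h₁ + h₂e ↔ (h₁,h₂)`. -/
abbrev Oct := ℍ[ℝ] × ℍ[ℝ]

/-- Cayley–Dickson multiplication. -/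
def omul (x y : Oct) : Oct :=
  (x.1 * y.1 - star y.2 * x.2, x.2 * star y.1 + y.2 * x.1)

def qi : ℍ[ℝ] := ⟨0,1,0,0⟩
def qj : ℍ[ℝ] := ⟨0,0,1,0⟩
def qk : ℍ[ℝ] := ⟨0,0,0,1⟩

/-- The standard orthonormal basis `1,i,j,k,e,f,g,h` of 𝕆 ≅ ℝ⁸. -/
def oe : Fin 8 → Oct
  | 0 => (1, 0) | 1 => (qi, 0) | 2 => (qj, 0) | 3 => (qk, 0)
  | 4 => (0, 1) | 5 => (0, qi) | 6 => (0, qj) | 7 => (0, qk)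

/-- The Euclidean inner product on 𝕆 ≅ ℝ⁸. -/
def ip8 (x y : Oct) : ℝ := (x.1 * star y.1).re + (x.2 * star y.2).re

/-- The Euclidean inner product on 𝕆² ≅ ℝ¹⁶. -/
def ip16 (x y : Oct × Oct) : ℝ := ip8 x.1 y.1 + ip8 x.2 y.2

/-- The nine octonionic Pauli matrices on 𝕆² ≅ ℝ¹⁶:
`I₁ = [[0,Id],[Id,0]]`, `Iₐ = [[0,-R_u],[R_u,0]]` for `u = i,j,k,e,f,g,h` (a = 2,…,8),
`I₉ = [[Id,0],[0,-Id]]`, where `R_u` is right octonion multiplication by `u`. -/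
def oPauli : Fin 9 → Oct × Oct → Oct × Oct
  | 0 => fun x => (x.2, x.1)
  | 1 => fun x => (-(omul x.2 (oe 1)), omul x.1 (oe 1))
  | 2 => fun x => (-(omul x.2 (oe 2)), omul x.1 (oe 2))
  | 3 => fun x => (-(omul x.2 (oe 3)), omul x.1 (oe 3))
  | 4 => fun x => (-(omul x.2 (oe 4)), omul x.1 (oe 4))
  | 5 => fun x => (-(omul x.2 (oe 5)), omul x.1 (oe 5))
  | 6 => fun x => (-(omul x.2 (oe 6)), omul x.1 (oe 6))
  | 7 => fun x => (-(omul x.2 (oe 7)), omul x.1 (oe 7))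
  | 8 => fun x => (x.1, -x.2)

theorem qi_re : qi.re = 0 := rfl
theorem qi_imI : qi.imI = 1 := rfl
theorem qi_imJ : qi.imJ = 0 := rfl
theorem qi_imK : qi.imK = 0 := rfl
theorem qj_re : qj.re = 0 := rfl
theorem qj_imI : qj.imI = 0 := rfl
theorem qj_imJ : qj.imJ = 1 := rfl
theorem qj_imK : qj.imK = 0 := rfl
theorem qk_re : qk.re = 0 := rfl
theorem qk_imI : qk.imI = 0 := rfl
theorem qk_imJ : qk.imJ = 0 := rfl
theorem qk_imK : qk.imK = 1 := rfl

set_option maxHeartbeats 2000000 in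
theorem oPauli_aux1 : ∀ α : Fin 9, ∀ x : Oct × Oct, oPauli α (oPauli α x) = x := by
  intro α ⟨⟨a,b⟩,⟨c,d⟩⟩
  fin_cases α <;>
    simp only [oPauli, omul, oe] <;>
    ext <;> simp only [qi_re, qi_imI, qi_imJ, qi_imK, qj_re, qj_imI, qj_imJ, qj_imK, qk_re, qk_imI, qk_imJ, qk_imK, Quaternion.re_mul, Quaternion.imI_mul, Quaternion.imJ_mul,
       Quaternion.imK_mul, Quaternion.re_star, Quaternion.imI_star,
       Quaternion.imJ_star, Quaternion.imK_star, Quaternion.re_neg,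
       Quaternion.imI_neg, Quaternion.imJ_neg, Quaternion.imK_neg,
       Quaternion.re_sub, Quaternion.imI_sub, Quaternion.imJ_sub,
       Quaternion.imK_sub, Quaternion.re_add, Quaternion.imI_add,
       Quaternion.imJ_add, Quaternion.imK_add, Quaternion.re_zero,
       Quaternion.imI_zero, Quaternion.imJ_zero, Quaternion.imK_zero,
       star_zero, star_one, mul_zero, zero_mul,
       mul_one, one_mul, sub_zero, zero_sub, add_zero, zero_add,
       neg_zero, neg_neg, Prod.neg_mk, Prod.fst_neg, Prod.snd_neg] <;> ring

set_option maxHeartbeats 2000000 in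
theorem oPauli_aux2 : ∀ α : Fin 9, ∀ x y : Oct × Oct,
    ip16 (oPauli α x) y = ip16 x (oPauli α y) := by
  intro α ⟨⟨a,b⟩,⟨c,d⟩⟩ ⟨⟨p,q⟩,⟨r,s⟩⟩
  fin_cases α <;>
    simp only [oPauli, omul, oe, ip16, ip8] <;>
    simp only [qi_re, qi_imI, qi_imJ, qi_imK, qj_re, qj_imI, qj_imJ, qj_imK, qk_re, qk_imI, qk_imJ, qk_imK, Quaternion.re_mul, Quaternion.imI_mul, Quaternion.imJ_mul,
       Quaternion.imK_mul, Quaternion.re_star, Quaternion.imI_star,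
       Quaternion.imJ_star, Quaternion.imK_star, Quaternion.re_neg,
       Quaternion.imI_neg, Quaternion.imJ_neg, Quaternion.imK_neg,
       Quaternion.re_sub, Quaternion.imI_sub, Quaternion.imJ_sub,
       Quaternion.imK_sub, Quaternion.re_add, Quaternion.imI_add,
       Quaternion.imJ_add, Quaternion.imK_add, Quaternion.re_zero,
       Quaternion.imI_zero, Quaternion.imJ_zero, Quaternion.imK_zero,
       star_zero, star_one, mul_zero, zero_mul,
       mul_one, one_mul, sub_zero, zero_sub, add_zero, zero_add,
       neg_zero, neg_neg, Prod.neg_mk, Prod.fst_neg, Prod.snd_neg] <;> ring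

set_option maxHeartbeats 4000000 in
theorem oPauli_aux3 : ∀ α β : Fin 9, α ≠ β →
    ∀ x : Oct × Oct, oPauli α (oPauli β x) = - oPauli β (oPauli α x) := by
  intro α β hab ⟨⟨a,b⟩,⟨c,d⟩⟩
  fin_cases α <;> fin_cases β <;> first
    | exact absurd rfl hab
    | (simp only [oPauli, omul, oe, Prod.neg_mk] <;>
       ext <;>
       simp only [qi_re, qi_imI, qi_imJ, qi_imK, qj_re, qj_imI, qj_imJ, qj_imK, qk_re, qk_imI, qk_imJ, qk_imK, Quaternion.re_mul, Quaternion.imI_mul, Quaternion.imJ_mul,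
         Quaternion.imK_mul, Quaternion.re_star, Quaternion.imI_star,
         Quaternion.imJ_star, Quaternion.imK_star, Quaternion.re_neg,
         Quaternion.imI_neg, Quaternion.imJ_neg, Quaternion.imK_neg,
         Quaternion.re_sub, Quaternion.imI_sub, Quaternion.imJ_sub,
         Quaternion.imK_sub, Quaternion.re_add, Quaternion.imI_add,
         Quaternion.imJ_add, Quaternion.imK_add, Quaternion.re_zero,
         Quaternion.imI_zero, Quaternion.imJ_zero, Quaternion.imK_zero,
         Quaternion.re_one, Quaternion.imI_one, Quaternion.imJ_one,
         Quaternion.imK_one, star_zero, star_one, mul_zero, zero_mul,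
         mul_one, one_mul, sub_zero, zero_sub, add_zero, zero_add,
         neg_zero, neg_neg] <;>
       ring)

/-- The nine octonionic Pauli matrices form a Clifford system of rank 9 on ℝ¹⁶:
each is a self-adjoint involution and they pairwise anticommute. -/
theorem oPauli_clifford_system :
    (∀ α : Fin 9, ∀ x : Oct × Oct, oPauli α (oPauli α x) = x) ∧
    (∀ α : Fin 9, ∀ x y : Oct × Oct, ip16 (oPauli α x) y = ip16 x (oPauli α y)) ∧
    (∀ α β : Fin 9, α ≠ β →
      ∀ x : Oct × Oct, oPauli α (oPauli β x) = - oPauli β (oPauli α x)) := ⟨oPauli_aux1, oPauli_aux2, oPauli_aux3⟩
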